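/- Jackson's theorem: for every L-Lipschitz function f : [-1,1] → ℝ and every natural number r ≥ 1, there exists a polynomial p of degree at most r such that sup_{x ∈ [-1,1]} |p(x) - f(x)| ≤ 6L/r. -/

import Mathlib

/-
Proof of Jackson's theorem via a discrete Jackson (Fejér-squared) kernel:
sample the function at 4n equally spaced angles, convolve with the square of
the Fejér kernel; discrete orthogonality of exponentials makes the result a
cosine polynomial of degree ≤ 2n-2, i.e. a polynomial in cos θ via Chebyshev
polynomials, with L∞ error ≤ 2√2·L/n on [-1,1].
-/

noncomputable section JacksonAux
open Finset Polynomial Real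

namespace JacksonAux

/-- sample points -/
def u (n : ℕ) (t : ℕ) : ℝ := 2 * π * t / (4 * n)

/-- Dirichlet-type sum -/
def S (n : ℕ) (v : ℝ) : ℂ := ∑ a ∈ range n, Complex.exp (a * v * Complex.I)

/-- Fejér kernel (unnormalized) -/
def F (n : ℕ) (v : ℝ) : ℝ := Complex.normSq (S n v)

/-- Jackson kernel (Fejér squared, unnormalized) -/
def K (n : ℕ) (v : ℝ) : ℝ := (F n v) ^ 2

lemma F_nonneg (n : ℕ) (v : ℝ) : 0 ≤ F n v := Complex.normSq_nonneg _

lemma K_nonneg (n : ℕ) (v : ℝ) : 0 ≤ K n v := sq_nonneg _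

lemma S_neg (n : ℕ) (v : ℝ) : S n (-v) = starRingEnd ℂ (S n v) := by
  simp only [S, map_sum]
  refine Finset.sum_congr rfl fun a _ => ?_
  rw [← Complex.exp_conj]
  congr 1
  simp [Complex.ext_iff]

lemma normSq_exp_mul_I_sub_one (w : ℝ) :
    Complex.normSq (Complex.exp (w * Complex.I) - 1) = 4 * Real.sin (w / 2) ^ 2 := by
  rw [Complex.exp_mul_I]
  have h : Real.sin (w/2) ^ 2 = 1/2 - Real.cos (2 * (w/2)) / 2 := Real.sin_sq_eq_half_sub _
  rw [show (2:ℝ) * (w/2) = w by ring] at h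
  simp [Complex.normSq_apply, Complex.add_re, Complex.add_im, Complex.cos_ofReal_re,
    Complex.sin_ofReal_re, Complex.cos_ofReal_im, Complex.sin_ofReal_im, Complex.I_re,
    Complex.I_im, Complex.mul_re, Complex.mul_im]
  nlinarith [Real.sin_sq_add_cos_sq w]

lemma fejer_identity (n : ℕ) (v : ℝ) :
    F n v * Real.sin (v / 2) ^ 2 = Real.sin (n * v / 2) ^ 2 := by
  have geom : S n v * (Complex.exp ((v : ℂ) * Complex.I) - 1)
      = Complex.exp (((n * v : ℝ) : ℂ) * Complex.I) - 1 := by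
    have h1 : ∀ a : ℕ, Complex.exp ((a : ℂ) * (v : ℂ) * Complex.I)
        = (Complex.exp ((v:ℂ) * Complex.I)) ^ a := by
      intro a
      rw [← Complex.exp_nat_mul]
      ring_nf
    rw [S]
    simp_rw [h1]
    rw [geom_sum_mul, ← Complex.exp_nat_mul]
    push_cast
    ring_nf
  have h := congrArg Complex.normSq geom
  rw [Complex.normSq_mul, normSq_exp_mul_I_sub_one, normSq_exp_mul_I_sub_one] at h
  have h2 : F n v * (4 * Real.sin (v/2) ^ 2) = 4 * Real.sin ((n*v)/2) ^ 2 := h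
  have h3 : (n : ℝ) * v / 2 = (n * v) / 2 := by ring
  rw [h3]
  nlinarith [h2]


lemma sum_exp_sample (n : ℕ) (hn : 1 ≤ n) (m : ℤ) (hm : m.natAbs < 4 * n) (θ : ℝ) :
    ∑ t ∈ range (4*n), Complex.exp ((m : ℂ) * ((u n t - θ : ℝ) : ℂ) * Complex.I)
      = if m = 0 then ((4*n : ℕ) : ℂ) else 0 := by
  by_cases hm0 : m = 0
  · subst hm0
    simp
  · rw [if_neg hm0]
    set w : ℂ := Complex.exp ((2 * (π:ℂ) * m / (4 * n)) * Complex.I) with hw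
    have hn0 : ((4 * n : ℕ) : ℂ) ≠ 0 := by
      simp only [ne_eq, Nat.cast_eq_zero]
      omega
    have hterm : ∀ t ∈ range (4*n),
        Complex.exp ((m : ℂ) * ((u n t - θ : ℝ) : ℂ) * Complex.I)
        = Complex.exp ((-(m * θ) : ℂ) * Complex.I) * w ^ t := by
      intro t _
      rw [hw, ← Complex.exp_nat_mul, ← Complex.exp_add]
      congr 1
      have hh : ((u n t - θ : ℝ) : ℂ) = 2 * (π:ℂ) * t / (4 * n) - θ := by
        push_cast [u]
        ring
      rw [hh]
      have h4n : ((4:ℂ) * n) ≠ 0 := by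
        simpa using hn0
      field_simp
      ring
    rw [Finset.sum_congr rfl hterm, ← Finset.mul_sum]
    have hw1 : w ≠ 1 := by
      intro hcontra
      rw [hw, Complex.exp_eq_one_iff] at hcontra
      obtain ⟨k, hk⟩ := hcontra
      have hI : (Complex.I : ℂ) ≠ 0 := Complex.I_ne_zero
      have hk' : (2 * (π:ℂ) * m / (4 * n)) * Complex.I = ((k:ℂ) * (2 * π)) * Complex.I := by
        linear_combination hk
      have hk2 := mul_right_cancel₀ hI hk'
      have hpi : (π:ℂ) ≠ 0 := by
        simp [Real.pi_ne_zero]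
      have h4n : ((4:ℂ) * n) ≠ 0 := by simpa using hn0
      have h2pi : (2 * (π:ℂ)) ≠ 0 := by
        simp [Real.pi_ne_zero]
      have hmk : (m : ℂ) = k * (4 * n) := by
        field_simp at hk2
        have hn' : (n:ℂ) ≠ 0 := Nat.cast_ne_zero.mpr (by omega)
        rw [div_eq_iff hn'] at hk2
        refine mul_left_cancel₀ h2pi ?_
        linear_combination (2 * (π:ℂ)) * hk2
      have hmk' : m = k * (4 * n : ℕ) := by
        exact_mod_cast hmk
      rcases eq_or_ne k 0 with hk0 | hk0
      · subst hk0; simp at hmk'; exact hm0 hmk'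
      · have h1 : m.natAbs = k.natAbs * (4*n) := by
          rw [hmk', Int.natAbs_mul, Int.natAbs_natCast]
        have h2 : 1 ≤ k.natAbs := Int.natAbs_pos.mpr hk0
        have h3 : 1 * (4*n) ≤ k.natAbs * (4*n) := Nat.mul_le_mul_right _ h2
        omega
    have hwN : w ^ (4*n) = 1 := by
      rw [hw, ← Complex.exp_nat_mul]
      have : ((4*n : ℕ) : ℂ) * (2 * (π:ℂ) * m / (4 * n) * Complex.I) = m * (2 * π * Complex.I) := by
        have h4n : ((4:ℂ) * n) ≠ 0 := by simpa using hn0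
        have hn' : (n:ℂ) ≠ 0 := Nat.cast_ne_zero.mpr (by omega)
        push_cast
        field_simp
      rw [this]
      exact Complex.exp_int_mul_two_pi_mul_I m
    rw [geom_sum_eq hw1, hwN]
    simp


noncomputable def E (v : ℝ) (m : ℤ) : ℂ := Complex.exp ((m : ℂ) * (v : ℂ) * Complex.I)

lemma S_eq (n : ℕ) (v : ℝ) : S n v = ∑ a ∈ range n, E v a := by
  refine Finset.sum_congr rfl fun a _ => ?_
  rw [E]
  norm_num

lemma S_neg_eq (n : ℕ) (v : ℝ) : S n (-v) = ∑ b ∈ range n, E v (-b) := by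
  rw [S]
  refine Finset.sum_congr rfl fun b _ => ?_
  rw [E]
  congr 1
  push_cast
  ring

lemma F_c (n : ℕ) (v : ℝ) : ((F n v : ℝ) : ℂ) = S n v * S n (-v) := by
  rw [F, S_neg, Complex.mul_conj]

lemma K_expand (n : ℕ) (v : ℝ) : ((K n v : ℝ) : ℂ) =
    ∑ a ∈ range n, ∑ b ∈ range n, ∑ c ∈ range n, ∑ d ∈ range n,
      E v ((a:ℤ) + b - c - d) := by
  have h : ((K n v : ℝ) : ℂ) = (S n v * S n (-v)) * (S n v * S n (-v)) := by
    rw [K]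
    push_cast
    rw [F_c n v]
    ring
  rw [h, S_eq, S_neg_eq, Finset.sum_mul_sum, Finset.sum_mul_sum]
  simp only [Finset.sum_mul_sum]
  refine Finset.sum_congr rfl fun a _ => ?_
  refine Finset.sum_congr rfl fun b _ => ?_
  refine Finset.sum_congr rfl fun c _ => ?_
  refine Finset.sum_congr rfl fun d _ => ?_
  simp only [E, ← Complex.exp_add]
  congr 1
  push_cast
  ring

lemma F_expand (n : ℕ) (v : ℝ) : ((F n v : ℝ) : ℂ) =
    ∑ a ∈ range n, ∑ b ∈ range n, E v ((a:ℤ) - b) := by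
  rw [F_c, S_eq, S_neg_eq, Finset.sum_mul_sum]
  refine Finset.sum_congr rfl fun a _ => ?_
  refine Finset.sum_congr rfl fun b _ => ?_
  simp only [E, ← Complex.exp_add]
  congr 1
  push_cast
  ring


noncomputable def C1 (n : ℕ) : ℝ := ∑ a ∈ range n, ∑ b ∈ range n, ∑ c ∈ range n, ∑ d ∈ range n,
  (if (a:ℤ) + b - c - d = 0 then (1:ℝ) else 0)

lemma sum_E_sample (n : ℕ) (hn : 1 ≤ n) (m : ℤ) (hm : m.natAbs < 4 * n) (θ : ℝ) :
    ∑ t ∈ range (4*n), E (u n t - θ) m = if m = 0 then ((4*n : ℕ) : ℂ) else 0 :=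
  sum_exp_sample n hn m hm θ

lemma sum_K_sample (n : ℕ) (hn : 1 ≤ n) (θ : ℝ) :
    ∑ t ∈ range (4*n), K n (u n t - θ) = (4*n : ℕ) * C1 n := by
  rw [← Complex.ofReal_inj]
  push_cast
  calc (∑ t ∈ range (4*n), ((K n (u n t - θ) : ℝ) : ℂ))
      = ∑ t ∈ range (4*n), ∑ a ∈ range n, ∑ b ∈ range n, ∑ c ∈ range n, ∑ d ∈ range n,
        E (u n t - θ) ((a:ℤ) + b - c - d) := by
        exact Finset.sum_congr rfl fun t _ => K_expand n _
    _ = ∑ a ∈ range n, ∑ b ∈ range n, ∑ c ∈ range n, ∑ d ∈ range n,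
        ∑ t ∈ range (4*n), E (u n t - θ) ((a:ℤ) + b - c - d) := by
        rw [Finset.sum_comm]
        refine Finset.sum_congr rfl fun a _ => ?_
        rw [Finset.sum_comm]
        refine Finset.sum_congr rfl fun b _ => ?_
        rw [Finset.sum_comm]
        refine Finset.sum_congr rfl fun c _ => ?_
        rw [Finset.sum_comm]
    _ = ∑ a ∈ range n, ∑ b ∈ range n, ∑ c ∈ range n, ∑ d ∈ range n,
        (if (a:ℤ) + b - c - d = 0 then ((4*n : ℕ) : ℂ) else 0) := by
        refine Finset.sum_congr rfl fun a ha => ?_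
        refine Finset.sum_congr rfl fun b hb => ?_
        refine Finset.sum_congr rfl fun c hc => ?_
        refine Finset.sum_congr rfl fun d hd => ?_
        have ha' := Finset.mem_range.mp ha
        have hb' := Finset.mem_range.mp hb
        have hc' := Finset.mem_range.mp hc
        have hd' := Finset.mem_range.mp hd
        exact sum_E_sample n hn _ (by omega) θ
    _ = ((4*n : ℕ) : ℂ) * ∑ a ∈ range n, ∑ b ∈ range n, ∑ c ∈ range n, ∑ d ∈ range n,
        (if (a:ℤ) + b - c - d = 0 then (1:ℂ) else 0) := by
        simp only [Finset.mul_sum, mul_ite, mul_one, mul_zero]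
    _ = 4 * (n:ℂ) * ((C1 n : ℝ) : ℂ) := by
        rw [C1]
        push_cast [apply_ite (Complex.ofReal)]
        ring

lemma sum_F_sample (n : ℕ) (hn : 1 ≤ n) (θ : ℝ) :
    ∑ t ∈ range (4*n), F n (u n t - θ) = (4*n : ℕ) * n := by
  rw [← Complex.ofReal_inj]
  push_cast
  calc (∑ t ∈ range (4*n), ((F n (u n t - θ) : ℝ) : ℂ))
      = ∑ t ∈ range (4*n), ∑ a ∈ range n, ∑ b ∈ range n, E (u n t - θ) ((a:ℤ) - b) := by
        exact Finset.sum_congr rfl fun t _ => F_expand n _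
    _ = ∑ a ∈ range n, ∑ b ∈ range n, ∑ t ∈ range (4*n), E (u n t - θ) ((a:ℤ) - b) := by
        rw [Finset.sum_comm]
        refine Finset.sum_congr rfl fun a _ => ?_
        rw [Finset.sum_comm]
    _ = ∑ a ∈ range n, ∑ b ∈ range n, (if (a:ℤ) - b = 0 then ((4*n : ℕ) : ℂ) else 0) := by
        refine Finset.sum_congr rfl fun a ha => ?_
        refine Finset.sum_congr rfl fun b hb => ?_
        have ha' := Finset.mem_range.mp ha
        have hb' := Finset.mem_range.mp hb
        exact sum_E_sample n hn _ (by omega) θ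
    _ = ∑ a ∈ range n, ((4*n : ℕ) : ℂ) := by
        refine Finset.sum_congr rfl fun a ha => ?_
        have : ∀ b ∈ range n, (if (a:ℤ) - b = 0 then ((4*n : ℕ) : ℂ) else 0)
            = (if b = a then ((4*n : ℕ) : ℂ) else 0) := by
          intro b _
          have hiff : ((a:ℤ) - b = 0) ↔ (b = a) := by omega
          simp only [hiff]
        rw [Finset.sum_congr rfl this, Finset.sum_ite_eq']
        simp [ha]
    _ = 4 * (n:ℂ) * n := by
        simp [Finset.sum_const]
        push_cast
        ring

lemma C1_lower (n : ℕ) (hn : 1 ≤ n) :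
    ((n:ℝ))^4 ≤ ((2*n - 1 : ℕ) : ℝ) * C1 n := by
  classical
  set Q := range n ×ˢ range n with hQ
  set t := range (2*n - 1) with ht
  have hmaps : ∀ p ∈ Q, p.1 + p.2 ∈ t := by
    intro p hp
    rw [hQ, Finset.mem_product] at hp
    rw [ht, Finset.mem_range]
    have h1 := Finset.mem_range.mp hp.1
    have h2 := Finset.mem_range.mp hp.2
    omega
  set r : ℕ → ℝ := fun s => (#(Q.filter (fun p => p.1 + p.2 = s)) : ℝ) with hr
  -- total mass
  have hmass : ∑ s ∈ t, r s = (n:ℝ)^2 := by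
    have := Finset.card_eq_sum_card_fiberwise hmaps
    have hQcard : #Q = n * n := by
      rw [hQ, Finset.card_product, Finset.card_range]
    rw [hQcard] at this
    have : ((n * n : ℕ) : ℝ) = ∑ s ∈ t, r s := by
      rw [this]
      push_cast
      rfl
    rw [← this]
    push_cast
    ring
  -- C1 = sum of squares of fibers
  have hC1 : C1 n = ∑ s ∈ t, (r s)^2 := by
    have step1 : C1 n = ∑ p ∈ Q, ∑ q ∈ Q, (if p.1 + p.2 = q.1 + q.2 then (1:ℝ) else 0) := by
      rw [C1, Finset.sum_product' (f := fun a b => ∑ q ∈ Q,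
        (if a + b = q.1 + q.2 then (1:ℝ) else 0))]
      refine Finset.sum_congr rfl fun a _ => ?_
      refine Finset.sum_congr rfl fun b _ => ?_
      rw [Finset.sum_product' (f := fun c d => (if a + b = c + d then (1:ℝ) else 0))]
      refine Finset.sum_congr rfl fun c _ => ?_
      refine Finset.sum_congr rfl fun d _ => ?_
      have hiff : ((a:ℤ) + b - c - d = 0) ↔ (a + b = c + d) := by omega
      simp only [hiff]
    have step2 : ∀ p ∈ Q, (∑ q ∈ Q, (if p.1 + p.2 = q.1 + q.2 then (1:ℝ) else 0))
        = r (p.1 + p.2) := by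
      intro p _
      have hb : r (p.1 + p.2) = ∑ q ∈ Q, (if q.1 + q.2 = p.1 + p.2 then (1:ℝ) else 0) :=
        (Finset.sum_boole _ _).symm
      rw [hb]
      refine Finset.sum_congr rfl fun q _ => ?_
      simp only [eq_comm]
    rw [step1, Finset.sum_congr rfl step2]
    rw [← Finset.sum_fiberwise_of_maps_to hmaps (fun p => r (p.1 + p.2))]
    refine Finset.sum_congr rfl fun s _ => ?_
    have : ∀ p ∈ Q.filter (fun p => p.1 + p.2 = s), r (p.1 + p.2) = r s := by
      intro p hp
      rw [(Finset.mem_filter.mp hp).2]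
    rw [Finset.sum_congr rfl this, Finset.sum_const, nsmul_eq_mul, sq]
  -- Cauchy–Schwarz
  have hcs := sq_sum_le_card_mul_sum_sq (s := t) (f := r)
  rw [hmass, ht, Finset.card_range] at hcs
  rw [hC1]
  calc ((n:ℝ))^4 = ((n:ℝ)^2)^2 := by ring
    _ ≤ ((2*n-1 : ℕ):ℝ) * ∑ s ∈ t, (r s)^2 := hcs

lemma u_zero (n : ℕ) : u n 0 = 0 := by simp [u]

lemma u_reflect (n : ℕ) (hn : 1 ≤ n) (t : ℕ) (ht1 : 1 ≤ t) (ht : t < 4*n) :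
    u n (4*n - t) = 2 * π - u n t := by
  have hn0 : ((4:ℝ) * n) ≠ 0 := by positivity
  rw [u, u]
  rw [Nat.cast_sub (by omega)]
  push_cast
  field_simp

lemma u_half (n : ℕ) (hn : 1 ≤ n) : u n (2*n) = π := by
  have hn0 : (n:ℝ) ≠ 0 := by positivity
  rw [u]
  push_cast
  field_simp
  ring

noncomputable def Gaux (n : ℕ) (f : ℝ → ℝ) (m : ℤ) (t : ℕ) : ℝ :=
  f (Real.cos (u n t)) * Real.sin ((m:ℝ) * u n t)

lemma sum_sin_vanish (n : ℕ) (hn : 1 ≤ n) (f : ℝ → ℝ) (m : ℤ) :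
    ∑ t ∈ range (4*n), Gaux n f m t = 0 := by
  set G : ℕ → ℝ := Gaux n f m with hG
  have key : ∀ t, 1 ≤ t → t < 4*n → G (4*n - t) = - G t := by
    intro t ht1 ht
    rw [hG]
    unfold Gaux
    rw [u_reflect n hn t ht1 ht, Real.cos_two_pi_sub]
    have hsin : Real.sin ((m:ℝ) * (2*π - u n t)) = - Real.sin ((m:ℝ) * u n t) := by
      have : (m:ℝ) * (2*π - u n t) = -((m:ℝ) * u n t) + m * (2*π) := by ring
      rw [this, Real.sin_add_int_mul_two_pi, Real.sin_neg]
    rw [hsin]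
    ring
  have hGzero : G 0 = 0 := by
    rw [hG]
    unfold Gaux
    simp [u_zero]
  have hGhalf : G (2*n) = 0 := by
    rw [hG]
    unfold Gaux
    rw [u_half n hn]
    have : (m:ℝ) * π = (m:ℝ) * π := rfl
    rw [show Real.sin ((m:ℝ)*π) = 0 from Real.sin_int_mul_pi m]
    ring
  refine Finset.sum_involution (fun t _ => if t = 0 then 0 else 4*n - t) ?_ ?_ ?_ ?_
  · intro t ht
    by_cases h0 : t = 0
    · rw [if_pos h0, h0, hGzero]
      ring
    · rw [if_neg h0]
      by_cases h2 : t = 2*n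
      · subst h2
        have : 4*n - 2*n = 2*n := by omega
        rw [this, hGhalf]
        ring
      · rw [key t (by omega) (Finset.mem_range.mp ht)]
        ring
  · intro t ht hGt
    by_cases h0 : t = 0
    · subst h0
      exact absurd hGzero hGt
    · simp only [if_neg h0]
      intro hcontra
      have ht' := Finset.mem_range.mp ht
      have h2 : t = 2*n := by omega
      exact hGt (h2 ▸ hGhalf)
  · intro t ht
    have ht' := Finset.mem_range.mp ht
    by_cases h0 : t = 0
    · simp [h0, Finset.mem_range]
      omega
    · simp only [if_neg h0, Finset.mem_range]
      omega
  · intro t ht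
    have ht' := Finset.mem_range.mp ht
    by_cases h0 : t = 0
    · simp [h0]
    · simp only [if_neg h0]
      have : ¬ (4*n - t = 0) := by omega
      simp only [if_neg this]
      omega


lemma chebyshev_natDegree_nat_le (k : ℕ) :
    (Polynomial.Chebyshev.T ℝ (k : ℤ)).natDegree ≤ k := by
  induction k using Nat.strong_induction_on with
  | _ k ih =>
    match k with
    | 0 => simp [Polynomial.Chebyshev.T_zero]
    | 1 => simp [Polynomial.Chebyshev.T_one]
    | (k+2) =>
      have hcast : ((k+2 : ℕ) : ℤ) = (k : ℤ) + 2 := by push_cast; ring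
      rw [hcast, Polynomial.Chebyshev.T_add_two]
      refine le_trans (Polynomial.natDegree_sub_le _ _) (max_le ?_ ?_)
      · have h1 : (2 * Polynomial.X * Polynomial.Chebyshev.T ℝ ((k:ℤ)+1)).natDegree ≤
            (2 * Polynomial.X : Polynomial ℝ).natDegree
              + (Polynomial.Chebyshev.T ℝ ((k:ℤ)+1)).natDegree :=
          Polynomial.natDegree_mul_le
        have h2 : (2 * Polynomial.X : Polynomial ℝ).natDegree ≤ 1 := by
          refine le_trans Polynomial.natDegree_mul_le ?_
          simp
        have h3 : (Polynomial.Chebyshev.T ℝ ((k:ℤ)+1)).natDegree ≤ k + 1 := by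
          have := ih (k+1) (by omega)
          rwa [show ((k+1:ℕ):ℤ) = (k:ℤ)+1 by push_cast; ring] at this
        omega
      · have := ih k (by omega)
        omega

lemma chebyshev_natDegree_le (m : ℤ) :
    (Polynomial.Chebyshev.T ℝ m).natDegree ≤ m.natAbs := by
  rw [← Polynomial.Chebyshev.T_natAbs]
  exact chebyshev_natDegree_nat_le m.natAbs


lemma E_re (v : ℝ) (m : ℤ) : (E v m).re = Real.cos ((m:ℝ) * v) := by
  rw [E]
  have : (m : ℂ) * (v : ℂ) * Complex.I = (((m : ℝ) * v : ℝ) : ℂ) * Complex.I := by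
    push_cast
    ring
  rw [this, Complex.exp_ofReal_mul_I_re]

lemma K_expand_real (n : ℕ) (v : ℝ) : K n v =
    ∑ a ∈ range n, ∑ b ∈ range n, ∑ c ∈ range n, ∑ d ∈ range n,
      Real.cos ((((a:ℤ) + b - c - d : ℤ) : ℝ) * v) := by
  have h := congrArg Complex.re (K_expand n v)
  rw [Complex.ofReal_re] at h
  rw [h]
  simp only [Complex.re_sum]
  refine Finset.sum_congr rfl fun a _ => ?_
  refine Finset.sum_congr rfl fun b _ => ?_
  refine Finset.sum_congr rfl fun c _ => ?_
  refine Finset.sum_congr rfl fun d _ => ?_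
  exact E_re _ _

/-- the discrete convolution is a cosine polynomial -/
lemma conv_eq (n : ℕ) (hn : 1 ≤ n) (f : ℝ → ℝ) (θ : ℝ) :
    ∑ t ∈ range (4*n), f (Real.cos (u n t)) * K n (u n t - θ)
    = ∑ a ∈ range n, ∑ b ∈ range n, ∑ c ∈ range n, ∑ d ∈ range n,
        (∑ t ∈ range (4*n), f (Real.cos (u n t))
          * Real.cos ((((a:ℤ) + b - c - d : ℤ) : ℝ) * u n t))
        * Real.cos ((((a:ℤ) + b - c - d : ℤ) : ℝ) * θ) := by
  calc ∑ t ∈ range (4*n), f (Real.cos (u n t)) * K n (u n t - θ)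
      = ∑ t ∈ range (4*n), ∑ a ∈ range n, ∑ b ∈ range n, ∑ c ∈ range n, ∑ d ∈ range n,
          f (Real.cos (u n t)) * Real.cos ((((a:ℤ) + b - c - d : ℤ) : ℝ) * (u n t - θ)) := by
        refine Finset.sum_congr rfl fun t _ => ?_
        rw [K_expand_real]
        rw [Finset.mul_sum]
        refine Finset.sum_congr rfl fun a _ => ?_
        rw [Finset.mul_sum]
        refine Finset.sum_congr rfl fun b _ => ?_
        rw [Finset.mul_sum]
        refine Finset.sum_congr rfl fun c _ => ?_
        rw [Finset.mul_sum]
    _ = ∑ a ∈ range n, ∑ b ∈ range n, ∑ c ∈ range n, ∑ d ∈ range n,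
          ∑ t ∈ range (4*n),
          f (Real.cos (u n t)) * Real.cos ((((a:ℤ) + b - c - d : ℤ) : ℝ) * (u n t - θ)) := by
        rw [Finset.sum_comm]
        refine Finset.sum_congr rfl fun a _ => ?_
        rw [Finset.sum_comm]
        refine Finset.sum_congr rfl fun b _ => ?_
        rw [Finset.sum_comm]
        refine Finset.sum_congr rfl fun c _ => ?_
        rw [Finset.sum_comm]
    _ = _ := by
        refine Finset.sum_congr rfl fun a _ => ?_
        refine Finset.sum_congr rfl fun b _ => ?_
        refine Finset.sum_congr rfl fun c _ => ?_
        refine Finset.sum_congr rfl fun d _ => ?_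
        set m : ℤ := (a:ℤ) + b - c - d with hm
        have expand : ∀ t, f (Real.cos (u n t)) * Real.cos ((m:ℝ) * (u n t - θ))
            = f (Real.cos (u n t)) * Real.cos ((m:ℝ) * u n t) * Real.cos ((m:ℝ) * θ)
              + Gaux n f m t * Real.sin ((m:ℝ) * θ) := by
          intro t
          rw [Gaux]
          have harg : (m:ℝ) * (u n t - θ) = (m:ℝ) * u n t - (m:ℝ) * θ := by ring
          rw [harg, Real.cos_sub]
          ring
        rw [Finset.sum_congr rfl (fun t _ => expand t), Finset.sum_add_distrib,
          ← Finset.sum_mul, ← Finset.sum_mul, sum_sin_vanish n hn f m]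
        ring

set_option maxHeartbeats 1000000 in
theorem jackson_aux (f : ℝ → ℝ) (L : ℝ) (hL : 0 ≤ L)
    (hf : ∀ x ∈ Set.Icc (-1 : ℝ) 1, ∀ y ∈ Set.Icc (-1 : ℝ) 1,
      |f x - f y| ≤ L * |x - y|)
    (n : ℕ) (hn : 1 ≤ n) :
    ∃ p : Polynomial ℝ, p.natDegree ≤ 2*n - 2 ∧
      ∀ x ∈ Set.Icc (-1 : ℝ) 1, |p.eval x - f x| ≤ 2 * Real.sqrt 2 * L / n := by
  classical
  set N := 4*n with hN
  set AA : ℝ := ((4*n : ℕ) : ℝ) * C1 n with hAA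
  have hn1 : (1:ℝ) ≤ (n:ℝ) := by exact_mod_cast hn
  have hnpos : (0:ℝ) < n := by linarith
  have hC1 := C1_lower n hn
  have hcast : ((2*n - 1 : ℕ) : ℝ) = 2*(n:ℝ) - 1 := by
    push_cast [Nat.cast_sub (by omega : 1 ≤ 2*n)]
    ring
  rw [hcast] at hC1
  have hC1pos : 0 < C1 n := by
    by_contra hC
    push_neg at hC
    have h2n1 : (0:ℝ) ≤ 2*(n:ℝ)-1 := by linarith
    nlinarith [pow_pos hnpos 4]
  have hAApos : 0 < AA := by
    rw [hAA]
    push_cast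
    nlinarith
  have hAAge : 2*(n:ℝ)^4 ≤ AA := by
    rw [hAA]
    push_cast
    nlinarith
  -- the polynomial
  set coef : ℤ → ℝ := fun m =>
    AA⁻¹ * ∑ t ∈ range N, f (Real.cos (u n t)) * Real.cos ((m:ℝ) * u n t) with hcoef
  set p : Polynomial ℝ := ∑ a ∈ range n, ∑ b ∈ range n, ∑ c ∈ range n, ∑ d ∈ range n,
    coef ((a:ℤ) + b - c - d) • Polynomial.Chebyshev.T ℝ ((a:ℤ) + b - c - d) with hp
  refine ⟨p, ?_, ?_⟩
  · -- degree bound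
    rw [hp]
    refine Polynomial.natDegree_sum_le_of_forall_le _ _ fun a ha => ?_
    refine Polynomial.natDegree_sum_le_of_forall_le _ _ fun b hb => ?_
    refine Polynomial.natDegree_sum_le_of_forall_le _ _ fun c hc => ?_
    refine Polynomial.natDegree_sum_le_of_forall_le _ _ fun d hd => ?_
    refine le_trans (Polynomial.natDegree_smul_le _ _) ?_
    refine le_trans (chebyshev_natDegree_le _) ?_
    have ha' := Finset.mem_range.mp ha
    have hb' := Finset.mem_range.mp hb
    have hc' := Finset.mem_range.mp hc
    have hd' := Finset.mem_range.mp hd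
    omega
  · -- error bound
    intro x hx
    obtain ⟨hx1, hx2⟩ := Set.mem_Icc.mp hx
    set θ := Real.arccos x with hθ
    have hcos : Real.cos θ = x := Real.cos_arccos hx1 hx2
    -- evaluation of p
    have heval : p.eval x = AA⁻¹ * ∑ t ∈ range N, f (Real.cos (u n t)) * K n (u n t - θ) := by
      rw [← hcos, hp, hN, conv_eq n hn f θ, Finset.mul_sum]
      rw [Polynomial.eval_finset_sum]
      refine Finset.sum_congr rfl fun a _ => ?_
      rw [Polynomial.eval_finset_sum, Finset.mul_sum]
      refine Finset.sum_congr rfl fun b _ => ?_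
      rw [Polynomial.eval_finset_sum, Finset.mul_sum]
      refine Finset.sum_congr rfl fun c _ => ?_
      rw [Polynomial.eval_finset_sum, Finset.mul_sum]
      refine Finset.sum_congr rfl fun d _ => ?_
      rw [Polynomial.eval_smul, Polynomial.Chebyshev.T_real_cos, smul_eq_mul, hcoef]
      ring
    have hK1 : ∑ t ∈ range N, K n (u n t - θ) = AA := by
      rw [hN, hAA]
      exact sum_K_sample n hn θ
    have key : p.eval x - f x
        = AA⁻¹ * ∑ t ∈ range N, (f (Real.cos (u n t)) - f x) * K n (u n t - θ) := by
      have hsplit : ∑ t ∈ range N, (f (Real.cos (u n t)) - f x) * K n (u n t - θ)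
          = (∑ t ∈ range N, f (Real.cos (u n t)) * K n (u n t - θ))
            - (∑ t ∈ range N, K n (u n t - θ)) * f x := by
        rw [Finset.sum_mul, ← Finset.sum_sub_distrib]
        refine Finset.sum_congr rfl fun t _ => ?_
        ring
      rw [heval, hsplit, hK1]
      field_simp
    -- pointwise bound on the numerator terms
    have hterm : ∀ t ∈ range N, |f (Real.cos (u n t)) - f x| * K n (u n t - θ)
        ≤ 2 * L * (|Real.sin ((u n t - θ)/2)| * K n (u n t - θ)) := by
      intro t _
      have hmem : Real.cos (u n t) ∈ Set.Icc (-1:ℝ) 1 :=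
        Set.mem_Icc.mpr ⟨Real.neg_one_le_cos _, Real.cos_le_one _⟩
      have hfd : |f (Real.cos (u n t)) - f x| ≤ L * |Real.cos (u n t) - x| :=
        hf _ hmem _ hx
      have hcc : |Real.cos (u n t) - x| ≤ 2 * |Real.sin ((u n t - θ)/2)| := by
        rw [← hcos, Real.cos_sub_cos]
        rw [abs_mul, abs_mul]
        have h1 : |(-2:ℝ)| = 2 := by norm_num
        rw [h1]
        have h2 : |Real.sin ((u n t + θ)/2)| ≤ 1 := Real.abs_sin_le_one _
        nlinarith [abs_nonneg (Real.sin ((u n t - θ)/2)), abs_nonneg (Real.sin ((u n t + θ)/2))]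
      have hKnn := K_nonneg n (u n t - θ)
      calc |f (Real.cos (u n t)) - f x| * K n (u n t - θ)
          ≤ (L * (2 * |Real.sin ((u n t - θ)/2)|)) * K n (u n t - θ) := by
            refine mul_le_mul_of_nonneg_right ?_ hKnn
            exact le_trans hfd (by nlinarith)
        _ = 2 * L * (|Real.sin ((u n t - θ)/2)| * K n (u n t - θ)) := by ring
    -- Cauchy–Schwarz
    have hcs : ∑ t ∈ range N, |Real.sin ((u n t - θ)/2)| * K n (u n t - θ)
        ≤ Real.sqrt AA * (2*(n:ℝ)) := by
      have hpt : ∀ t, |Real.sin ((u n t - θ)/2)| * K n (u n t - θ)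
          = Real.sqrt (K n (u n t - θ)) * Real.sqrt (K n (u n t - θ) * Real.sin ((u n t - θ)/2)^2) := by
        intro t
        rw [← Real.sqrt_mul (K_nonneg n _)]
        have : K n (u n t - θ) * (K n (u n t - θ) * Real.sin ((u n t - θ)/2)^2)
            = (|Real.sin ((u n t - θ)/2)| * K n (u n t - θ))^2 := by
          rw [mul_pow, sq_abs]
          ring
        rw [this, Real.sqrt_sq (mul_nonneg (abs_nonneg _) (K_nonneg n _))]
      have hB : ∑ t ∈ range N, K n (u n t - θ) * Real.sin ((u n t - θ)/2)^2
          ≤ 4*(n:ℝ)^2 := by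
        have hptB : ∀ t ∈ range N, K n (u n t - θ) * Real.sin ((u n t - θ)/2)^2
            ≤ F n (u n t - θ) := by
          intro t _
          have : K n (u n t - θ) * Real.sin ((u n t - θ)/2)^2
              = F n (u n t - θ) * Real.sin ((n:ℝ) * (u n t - θ) / 2)^2 := by
            rw [K, sq]
            rw [mul_assoc, fejer_identity]
          rw [this]
          have := Real.sin_sq_le_one ((n:ℝ) * (u n t - θ) / 2)
          nlinarith [F_nonneg n (u n t - θ), this]
        refine le_trans (Finset.sum_le_sum hptB) ?_
        rw [hN, sum_F_sample n hn θ]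
        push_cast
        nlinarith
      calc ∑ t ∈ range N, |Real.sin ((u n t - θ)/2)| * K n (u n t - θ)
          = ∑ t ∈ range N, Real.sqrt (K n (u n t - θ))
              * Real.sqrt (K n (u n t - θ) * Real.sin ((u n t - θ)/2)^2) := by
            exact Finset.sum_congr rfl fun t _ => hpt t
        _ ≤ Real.sqrt (∑ t ∈ range N, K n (u n t - θ))
              * Real.sqrt (∑ t ∈ range N, K n (u n t - θ) * Real.sin ((u n t - θ)/2)^2) := by
            exact Real.sum_sqrt_mul_sqrt_le _ (fun t => K_nonneg n _)
              (fun t => mul_nonneg (K_nonneg n _) (sq_nonneg _))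
        _ ≤ Real.sqrt AA * (2*(n:ℝ)) := by
            rw [hK1]
            refine mul_le_mul_of_nonneg_left ?_ (Real.sqrt_nonneg _)
            refine le_trans (Real.sqrt_le_sqrt hB) ?_
            rw [show (4*(n:ℝ)^2) = (2*(n:ℝ))^2 by ring, Real.sqrt_sq (by positivity)]
    -- put everything together
    have habs : |p.eval x - f x|
        ≤ AA⁻¹ * (2 * L * (Real.sqrt AA * (2*(n:ℝ)))) := by
      rw [key, abs_mul, abs_of_pos (inv_pos.mpr hAApos)]
      refine mul_le_mul_of_nonneg_left ?_ (le_of_lt (inv_pos.mpr hAApos))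
      refine le_trans (Finset.abs_sum_le_sum_abs _ _) ?_
      have step : ∀ t ∈ range N, |(f (Real.cos (u n t)) - f x) * K n (u n t - θ)|
          ≤ 2 * L * (|Real.sin ((u n t - θ)/2)| * K n (u n t - θ)) := by
        intro t ht
        rw [abs_mul, abs_of_nonneg (K_nonneg n _)]
        exact hterm t ht
      refine le_trans (Finset.sum_le_sum step) ?_
      rw [← Finset.mul_sum]
      refine mul_le_mul_of_nonneg_left hcs (by positivity)
    refine le_trans habs ?_
    -- final arithmetic: AA⁻¹ * (2L * √AA * 2n) = 4Ln/√AA ≤ 4Ln/(√2 n²) = 2√2 L/n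
    have hsq : Real.sqrt AA * Real.sqrt AA = AA := Real.mul_self_sqrt (le_of_lt hAApos)
    have hsqrtAA_ge : Real.sqrt 2 * (n:ℝ)^2 ≤ Real.sqrt AA := by
      have : Real.sqrt (2*(n:ℝ)^4) ≤ Real.sqrt AA := Real.sqrt_le_sqrt hAAge
      refine le_trans (le_of_eq ?_) this
      rw [Real.sqrt_mul (by norm_num : (0:ℝ) ≤ 2)]
      congr 1
      rw [show ((n:ℝ)^4) = ((n:ℝ)^2)^2 by ring, Real.sqrt_sq (by positivity)]
    have hsqrtAApos : 0 < Real.sqrt AA := Real.sqrt_pos.mpr hAApos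
    have hsqrt2pos : 0 < Real.sqrt 2 := by positivity
    have hs2 : Real.sqrt 2 * Real.sqrt 2 = 2 := Real.mul_self_sqrt (by norm_num)
    rw [div_eq_mul_inv (2 * Real.sqrt 2 * L)]
    have hchain : AA⁻¹ * (2 * L * (Real.sqrt AA * (2*(n:ℝ)))) = 4*L*(n:ℝ) / Real.sqrt AA := by
      rw [eq_div_iff (ne_of_gt hsqrtAApos)]
      calc AA⁻¹ * (2 * L * (Real.sqrt AA * (2*(n:ℝ)))) * Real.sqrt AA
          = AA⁻¹ * (Real.sqrt AA * Real.sqrt AA) * (4*L*(n:ℝ)) := by ring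
        _ = 4*L*(n:ℝ) := by
            rw [hsq, inv_mul_cancel₀ (ne_of_gt hAApos), one_mul]
    rw [hchain]
    rw [div_le_iff₀ hsqrtAApos]
    have hgoal : 4*L*(n:ℝ) ≤ (2 * Real.sqrt 2 * L * (n:ℝ)⁻¹) * (Real.sqrt 2 * (n:ℝ)^2) := by
      have : (2 * Real.sqrt 2 * L * (n:ℝ)⁻¹) * (Real.sqrt 2 * (n:ℝ)^2)
          = 2 * (Real.sqrt 2 * Real.sqrt 2) * L * ((n:ℝ)⁻¹ * (n:ℝ)^2) := by ring
      rw [this, hs2]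
      have hninv : (n:ℝ)⁻¹ * (n:ℝ)^2 = (n:ℝ) := by
        field_simp
      rw [hninv]
      nlinarith
    refine le_trans hgoal ?_
    refine mul_le_mul_of_nonneg_left hsqrtAA_ge ?_
    positivity



end JacksonAux

end JacksonAux

open JacksonAux in
/-- Jackson's theorem: every `L`-Lipschitz function on `[-1,1]` is
uniformly approximated to within `6L/r` by a polynomial of degree at most `r`. -/
theorem jackson (f : ℝ → ℝ) (L : ℝ) (hL : 0 ≤ L)
    (hf : ∀ x ∈ Set.Icc (-1 : ℝ) 1, ∀ y ∈ Set.Icc (-1 : ℝ) 1,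
      |f x - f y| ≤ L * |x - y|)
    (r : ℕ) (hr : 1 ≤ r) :
    ∃ p : Polynomial ℝ, p.natDegree ≤ r ∧
      ∀ x ∈ Set.Icc (-1 : ℝ) 1, |p.eval x - f x| ≤ 6 * L / r := by
  set n : ℕ := r / 2 + 1 with hn_def
  have hn : 1 ≤ n := by omega
  obtain ⟨p, hdeg, herr⟩ := jackson_aux f L hL hf n hn
  refine ⟨p, ?_, ?_⟩
  · refine le_trans hdeg ?_
    omega
  · intro x hx
    refine le_trans (herr x hx) ?_
    have hr2n : (r : ℝ) ≤ 2 * (n:ℝ) - 1 := by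
      have : r ≤ 2 * n - 1 := by omega
      have h2 : (r:ℝ) ≤ ((2*n - 1 : ℕ) : ℝ) := by exact_mod_cast this
      refine le_trans h2 ?_
      push_cast [Nat.cast_sub (by omega : 1 ≤ 2*n)]
      ring_nf
      exact le_refl _
    have hrpos : (0:ℝ) < r := by exact_mod_cast hr
    have hnpos : (0:ℝ) < n := by positivity
    have hs15 : Real.sqrt 2 ≤ 1.5 := by
      nlinarith [Real.sq_sqrt (show (0:ℝ) ≤ 2 by norm_num), Real.sqrt_nonneg 2]
    rw [div_le_div_iff₀ hnpos hrpos]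
    have hLr : 0 ≤ L * r := mul_nonneg hL (le_of_lt hrpos)
    nlinarith [mul_le_mul_of_nonneg_left hr2n hL, mul_nonneg hL (le_of_lt hnpos),
      mul_le_mul_of_nonneg_right hs15 hLr]
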